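/- Let (X,d) be a compact metric space and (F_n) a sequence of nonempty closed subsets converging to a nonempty closed subset F in the Hausdorff distance. For each n let B_n = { f ∈ I_{F_n} : ‖f‖_∞ ≤ 1, L_d(Re f) ≤ 1, L_d(Im f) ≤ 1 } and similarly B for F, where I_F is the ideal of continuous complex functions vanishing on F. Then Haus_{‖·‖_∞}(B_n, B) → 0 as n → ∞; in particular, if Haus(F_n,F) < ε² with 0 < ε < 1 then Haus_{‖·‖_∞}(B_n, B) ≤ 8ε. -/

import Mathlib

open Metric Filter

/-- The closed unit ball for the D-norm associated to the vanishing ideal of a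
closed set `F ⊆ X`: continuous complex functions vanishing on `F`, with sup norm
at most 1 and real and imaginary parts 1-Lipschitz. -/
def modularBall {X : Type*} [MetricSpace X] [CompactSpace X] (F : Set X) :
    Set C(X, ℂ) :=
  {f : C(X, ℂ) | (∀ x ∈ F, f x = 0) ∧ ‖f‖ ≤ 1 ∧
    LipschitzWith 1 (fun x => (f x).re) ∧ LipschitzWith 1 (fun x => (f x).im)}

section aux

variable {X : Type*} [MetricSpace X] [CompactSpace X]

/-- Key approximation lemma: if `Haus(G, F) < ε²`, every element of the modular ball of `F`
is within `8ε` of the modular ball of `G`. -/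
lemma modularBall_approx {F G : Set X} (hFne : F.Nonempty) (hGne : G.Nonempty)
    {ε : ℝ} (hε : 0 < ε) (hε1 : ε ≤ 1) (h : hausdorffDist G F < ε ^ 2) :
    ∀ f ∈ modularBall F, ∃ g ∈ modularBall G, ‖f - g‖ ≤ 8 * ε := by
  rintro f hf
  obtain ⟨hf0, hfn, hfre, hfim⟩ := hf
  set u : X → ℝ := fun x => (f x).re with hu_def
  set v : X → ℝ := fun x => (f x).im with hv_def
  have hεpos : (0:ℝ) < 1 + ε := by linarith
  -- basic bounds on u, v
  have hfx : ∀ x, ‖f x‖ ≤ 1 := by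
    intro x
    calc ‖f x‖ = ‖f x‖ := rfl
    _ ≤ ‖f‖ := f.norm_coe_le_norm x
    _ ≤ 1 := hfn
  have hub : ∀ x, |u x| ≤ 1 := fun x => (Complex.abs_re_le_norm _).trans (hfx x)
  have hvb : ∀ x, |v x| ≤ 1 := fun x => (Complex.abs_im_le_norm _).trans (hfx x)
  have hsq : ∀ x, u x ^ 2 + v x ^ 2 ≤ 1 := by
    intro x
    have h1 : ‖f x‖ ^ 2 = u x ^ 2 + v x ^ 2 := by
      rw [Complex.sq_norm, Complex.normSq_apply]; ring
    nlinarith [hfx x, norm_nonneg (f x)]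
  have hedist : EMetric.hausdorffEdist G F ≠ ⊤ :=
    hausdorffEdist_ne_top_of_nonempty_of_bounded hGne hFne
      (isCompact_univ.isBounded.subset (Set.subset_univ _))
      (isCompact_univ.isBounded.subset (Set.subset_univ _))
  have hinf : ∀ x, infDist x F ≤ infDist x G + ε ^ 2 := fun x =>
    le_trans (infDist_le_infDist_add_hausdorffDist hedist) (by linarith)
  have hle_inf : ∀ (w : X → ℝ), LipschitzWith 1 w → (∀ y ∈ F, w y = 0) →
      ∀ x, |w x| ≤ infDist x F := by
    intro w hw hw0 x
    have : Nonempty F := hFne.to_subtype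
    rw [infDist_eq_iInf]
    refine le_ciInf fun y => ?_
    have h1 : w y = 0 := hw0 y y.2
    have h2 := hw.dist_le_mul x y
    rw [Real.dist_eq] at h2
    rw [NNReal.coe_one, one_mul] at h2
    calc |w x| = |w x - w y.1| := by rw [h1, sub_zero]
    _ ≤ dist x y.1 := h2
  have huG : ∀ x, |u x| ≤ infDist x G + ε ^ 2 := fun x =>
    (hle_inf u hfre (fun y hy => by simp [hu_def, hf0 y hy]) x).trans (hinf x)
  have hvG : ∀ x, |v x| ≤ infDist x G + ε ^ 2 := fun x =>
    (hle_inf v hfim (fun y hy => by simp [hv_def, hf0 y hy]) x).trans (hinf x)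
  -- the cutoff
  set c : X → ℝ := fun x => min (1 / (1 + ε)) (infDist x G) with hc_def
  have hc0 : ∀ x, 0 ≤ c x := fun x => le_min (by positivity) infDist_nonneg
  have hcle : ∀ x, c x ≤ 1 / (1 + ε) := fun x => min_le_left _ _
  have hcle' : ∀ x, c x ≤ infDist x G := fun x => min_le_right _ _
  have hc_lip : LipschitzWith 1 c := by
    have := (LipschitzWith.const' (1 / (1 + ε)) (K := 1)).min (lipschitz_infDist_pt G)
    simpa only [max_self] using this
  set r : X → ℝ := fun x => max (-(c x)) (min (c x) (u x / (1 + ε))) with hr_def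
  set s : X → ℝ := fun x => max (-(c x)) (min (c x) (v x / (1 + ε))) with hs_def
  have hdiv_lip : ∀ (w : X → ℝ), LipschitzWith 1 w →
      LipschitzWith 1 (fun x => w x / (1 + ε)) := by
    intro w hw
    apply LipschitzWith.of_dist_le_mul
    intro x y
    have h2 := hw.dist_le_mul x y
    rw [Real.dist_eq] at h2 ⊢
    rw [NNReal.coe_one, one_mul] at h2 ⊢
    rw [div_sub_div_same, abs_div, abs_of_pos hεpos]
    calc |w x - w y| / (1 + ε) ≤ |w x - w y| := by
          apply div_le_self (abs_nonneg _); linarith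
    _ ≤ dist x y := h2
  have hr_lip : LipschitzWith 1 r := by
    have := hc_lip.neg.max (hc_lip.min (hdiv_lip u hfre))
    simpa only [max_self, Pi.neg_apply] using this
  have hs_lip : LipschitzWith 1 s := by
    have := hc_lip.neg.max (hc_lip.min (hdiv_lip v hfim))
    simpa only [max_self, Pi.neg_apply] using this
  have hr_abs : ∀ x, |r x| ≤ c x := by
    intro x
    rw [abs_le]
    exact ⟨le_max_left _ _,
      max_le (by linarith [hc0 x]) (min_le_left _ _)⟩
  have hs_abs : ∀ x, |s x| ≤ c x := by
    intro x
    rw [abs_le]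
    exact ⟨le_max_left _ _,
      max_le (by linarith [hc0 x]) (min_le_left _ _)⟩
  -- equality away from G
  have habs : ∀ (w : X → ℝ), (∀ x, |w x| ≤ 1) → (∀ x, |w x| ≤ infDist x G + ε ^ 2) →
      ∀ x, ε ≤ infDist x G → |w x / (1 + ε)| ≤ c x := by
    intro w hw1 hw2 x hx
    rw [abs_div, abs_of_pos hεpos]
    apply le_min
    · gcongr
      exact hw1 x
    · rw [div_le_iff₀ hεpos]
      have := hw2 x
      nlinarith [hε.le]
  have hclamp : ∀ (t b : ℝ), |t| ≤ b → max (-b) (min b t) = t := by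
    intro t b ht
    rw [abs_le] at ht
    rw [min_eq_right ht.2, max_eq_right (by rw [neg_le]; linarith [ht.1, ht.2]; )]
  have hreq : ∀ x, ε ≤ infDist x G → r x = u x / (1 + ε) := by
    intro x hx
    exact hclamp _ _ (habs u hub huG x hx)
  have hseq : ∀ x, ε ≤ infDist x G → s x = v x / (1 + ε) := by
    intro x hx
    exact hclamp _ _ (habs v hvb hvG x hx)
  -- define g
  set g : C(X, ℂ) := ⟨fun x => (r x : ℂ) + (s x : ℂ) * Complex.I,
    (Complex.continuous_ofReal.comp hr_lip.continuous).add
      ((Complex.continuous_ofReal.comp hs_lip.continuous).mul continuous_const)⟩ with hg_def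
  have hg_re : ∀ x, (g x).re = r x := by intro x; simp [hg_def]
  have hg_im : ∀ x, (g x).im = s x := by intro x; simp [hg_def]
  have hgG : ∀ x ∈ G, g x = 0 := by
    intro x hx
    have hc : c x = 0 := le_antisymm (by simpa [infDist_zero_of_mem hx] using hcle' x) (hc0 x)
    have hr0 : r x = 0 := le_antisymm (by simpa [hc] using (abs_le.1 (hr_abs x)).2)
      (by have := (abs_le.1 (hr_abs x)).1; simp [hc] at this; linarith)
    have hs0 : s x = 0 := le_antisymm (by simpa [hc] using (abs_le.1 (hs_abs x)).2)
      (by have := (abs_le.1 (hs_abs x)).1; simp [hc] at this; linarith)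
    simp [hg_def, hr0, hs0]
  have hgn : ∀ x, ‖g x‖ ≤ 1 := by
    intro x
    have hsqg : ‖g x‖ ^ 2 = r x ^ 2 + s x ^ 2 := by
      rw [Complex.sq_norm]
      show Complex.normSq ((r x : ℂ) + (s x : ℂ) * Complex.I) = _
      exact Complex.normSq_add_mul_I _ _
    have hbound : r x ^ 2 + s x ^ 2 ≤ 1 := by
      rcases le_or_gt ε (infDist x G) with hd | hd
      · rw [hreq x hd, hseq x hd]
        have := hsq x
        rw [div_pow, div_pow, ← add_div, div_le_one (by positivity)]
        nlinarith
      · have h1 : c x ≤ ε := (hcle' x).trans hd.le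
        have h2 : c x * (1 + ε) ≤ 1 := by
          have := hcle x
          rw [le_div_iff₀ hεpos] at this
          exact this
        nlinarith [abs_le.1 (hr_abs x), abs_le.1 (hs_abs x), hc0 x]
    nlinarith [norm_nonneg (g x)]
  have hgball : g ∈ modularBall G := by
    refine ⟨hgG, (ContinuousMap.norm_le _ zero_le_one).mpr hgn, ?_, ?_⟩
    · have : (fun x => (g x).re) = r := funext hg_re
      rw [this]; exact hr_lip
    · have : (fun x => (g x).im) = s := funext hg_im
      rw [this]; exact hs_lip
  refine ⟨g, hgball, ?_⟩
  rw [ContinuousMap.norm_le _ (by positivity)]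
  intro x
  have hre : (f x - g x).re = u x - r x := by simp [hg_re x, hu_def]
  have him : (f x - g x).im = v x - s x := by simp [hg_im x, hv_def]
  have habs' : ‖f x - g x‖ ≤ |u x - r x| + |v x - s x| := by
    calc ‖f x - g x‖ ≤ |(f x - g x).re| + |(f x - g x).im| :=
      Complex.norm_le_abs_re_add_abs_im _
    _ = |u x - r x| + |v x - s x| := by rw [hre, him]
  rw [ContinuousMap.sub_apply]
  refine habs'.trans ?_
  rcases le_or_gt ε (infDist x G) with hd | hd
  · rw [hreq x hd, hseq x hd]
    have h1 : |u x - u x / (1 + ε)| ≤ ε := by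
      rw [show u x - u x / (1 + ε) = u x * (ε / (1 + ε)) from by field_simp; ring]
      rw [abs_mul, abs_div, abs_of_pos hε, abs_of_pos hεpos]
      calc |u x| * (ε / (1 + ε)) ≤ 1 * (ε / (1 + ε)) := by
            apply mul_le_mul_of_nonneg_right (hub x) (by positivity)
      _ ≤ ε := by rw [one_mul]; apply div_le_self hε.le; linarith
    have h2 : |v x - v x / (1 + ε)| ≤ ε := by
      rw [show v x - v x / (1 + ε) = v x * (ε / (1 + ε)) from by field_simp; ring]
      rw [abs_mul, abs_div, abs_of_pos hε, abs_of_pos hεpos]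
      calc |v x| * (ε / (1 + ε)) ≤ 1 * (ε / (1 + ε)) := by
            apply mul_le_mul_of_nonneg_right (hvb x) (by positivity)
      _ ≤ ε := by rw [one_mul]; apply div_le_self hε.le; linarith
    linarith
  · have h1 : |u x - r x| ≤ |u x| + |r x| := abs_sub _ _
    have h2 : |v x - s x| ≤ |v x| + |s x| := abs_sub _ _
    have h3 : |u x| ≤ ε + ε ^ 2 := (huG x).trans (by linarith)
    have h4 : |v x| ≤ ε + ε ^ 2 := (hvG x).trans (by linarith)
    have h5 : |r x| ≤ ε := (hr_abs x).trans ((hcle' x).trans hd.le)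
    have h6 : |s x| ≤ ε := (hs_abs x).trans ((hcle' x).trans hd.le)
    nlinarith


/-- Quantitative Hausdorff bound between modular balls. -/
lemma modularBall_hdist {F G : Set X} (hFne : F.Nonempty) (hGne : G.Nonempty)
    {ε : ℝ} (hε : 0 < ε) (hε1 : ε ≤ 1) (h : hausdorffDist F G < ε ^ 2) :
    hausdorffDist (modularBall F) (modularBall G) ≤ 8 * ε := by
  apply hausdorffDist_le_of_mem_dist (by positivity)
  · intro f hf
    obtain ⟨g, hg, hfg⟩ := modularBall_approx hFne hGne hε hε1
      (by rwa [hausdorffDist_comm]) f hf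
    exact ⟨g, hg, by rwa [dist_eq_norm]⟩
  · intro g hg
    obtain ⟨f, hf, hgf⟩ := modularBall_approx hGne hFne hε hε1 h g hg
    exact ⟨f, hf, by rwa [dist_eq_norm]⟩

end aux

/-- If nonempty closed sets `F_n → F` in Hausdorff distance, then
the associated unit balls `B_n → B` in Hausdorff distance for the sup norm;
quantitatively, `Haus(F_n, F) < ε²` with `0 < ε < 1` implies
`Haus(B_n, B) ≤ 8ε`. -/
theorem modularBall_hausdorff_convergence
    {X : Type*} [MetricSpace X] [CompactSpace X]
    (Fs : ℕ → Set X) (F : Set X)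
    (hFs : ∀ n, IsClosed (Fs n)) (hFsne : ∀ n, (Fs n).Nonempty)
    (hF : IsClosed F) (hFne : F.Nonempty)
    (hconv : Tendsto (fun n => hausdorffDist (Fs n) F) atTop (nhds 0)) :
    Tendsto (fun n => hausdorffDist (modularBall (Fs n)) (modularBall F))
      atTop (nhds 0) ∧
    ∀ n, ∀ ε : ℝ, 0 < ε → ε < 1 → hausdorffDist (Fs n) F < ε ^ 2 →
      hausdorffDist (modularBall (Fs n)) (modularBall F) ≤ 8 * ε := by
  have quant : ∀ n, ∀ ε : ℝ, 0 < ε → ε ≤ 1 → hausdorffDist (Fs n) F < ε ^ 2 →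
      hausdorffDist (modularBall (Fs n)) (modularBall F) ≤ 8 * ε :=
    fun n ε hε hε1 hlt => modularBall_hdist (hFsne n) hFne hε hε1 hlt
  refine ⟨?_, fun n ε hε hε1 hlt => quant n ε hε hε1.le hlt⟩
  rw [Metric.tendsto_atTop]
  intro δ hδ
  set ε : ℝ := min (δ / 16) 1 with hε_def
  have hεpos : 0 < ε := lt_min (by linarith) one_pos
  have hε1 : ε ≤ 1 := min_le_right _ _
  obtain ⟨N, hN⟩ := Metric.tendsto_atTop.1 hconv (ε ^ 2) (by positivity)
  refine ⟨N, fun n hn => ?_⟩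
  have h2 := hN n hn
  rw [Real.dist_0_eq_abs, abs_of_nonneg hausdorffDist_nonneg] at h2
  have h3 := quant n ε hεpos hε1 h2
  rw [Real.dist_0_eq_abs, abs_of_nonneg hausdorffDist_nonneg]
  calc hausdorffDist (modularBall (Fs n)) (modularBall F) ≤ 8 * ε := h3
  _ ≤ 8 * (δ / 16) := by
      apply mul_le_mul_of_nonneg_left (min_le_left _ _) (by norm_num)
  _ < δ := by linarith
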